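/- If X supports a semilocal (q,p)-Poincaré inequality, then so does its completion X̂ (with the extended measure). -/

import Mathlib

open Metric MeasureTheory Set Filter UniformSpace
open scoped ENNReal NNReal Topology

noncomputable section

namespace Paper

universe u

/-- A nonconstant compact rectifiable curve in `X`, parameterized by arc length,
regarded as a `1`-Lipschitz map on `[0, len]`. -/
structure Curve (X : Type u) [MetricSpace X] where
  len : ℝ
  len_pos : 0 < len
  toFun : ℝ → X
  lip : LipschitzOnWith 1 toFun (Set.Icc 0 len)
  nonconst : ∃ t ∈ Set.Icc (0 : ℝ) len, toFun t ≠ toFun 0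

variable {X : Type u} [MetricSpace X]

/-- The line integral `∫_γ g ds` of a nonnegative function along a curve. -/
def Curve.lineIntegral (γ : Curve X) (g : X → ℝ≥0∞) : ℝ≥0∞ :=
  ∫⁻ t in Set.Icc (0 : ℝ) γ.len, g (γ.toFun t)

/-- The curve `γ` lies in the set `E`. -/
def Curve.In (γ : Curve X) (E : Set X) : Prop :=
  ∀ t ∈ Set.Icc (0 : ℝ) γ.len, γ.toFun t ∈ E

/-- The upper gradient inequality along the curve `γ`; the left-hand side is `∞`
whenever one of the endpoint values is `±∞`. -/
def ugIneq (f : X → EReal) (g : X → ℝ≥0∞) (γ : Curve X) : Prop :=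
  (f (γ.toFun 0) - f (γ.toFun γ.len)).abs ≤ γ.lineIntegral g

variable [MeasurableSpace X]

/-- `g` is an upper gradient of `f` on `E` (with `E` regarded as a metric space
in its own right). -/
def IsUpperGradOn (f : X → EReal) (g : X → ℝ≥0∞) (E : Set X) : Prop :=
  Measurable (fun x : E => g x) ∧ ∀ γ : Curve X, γ.In E → ugIneq f g γ

/-- The curve family `Γ` has zero `p`-modulus with respect to `μ`. -/
def ZeroMod (μ : Measure X) (p : ℝ) (Γ : Set (Curve X)) : Prop :=
  ∃ ρ : X → ℝ≥0∞, Measurable ρ ∧ (∫⁻ x, ρ x ^ p ∂μ) < ∞ ∧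
    ∀ γ ∈ Γ, γ.lineIntegral ρ = ∞

/-- `g` is a `p`-weak upper gradient of `f` on `E`. -/
def IsWeakUpperGradOn (μ : Measure X) (p : ℝ) (f : X → EReal) (g : X → ℝ≥0∞)
    (E : Set X) : Prop :=
  Measurable (fun x : E => g x) ∧
    ZeroMod (μ.restrict E) p {γ : Curve X | γ.In E ∧ ¬ ugIneq f g γ}

/-- `g` is a (the a.e.-unique) minimal `p`-weak upper gradient of `f` on `E`:
a locally `L^p` `p`-weak upper gradient of `f` which is a.e. smaller than every
locally `L^p` `p`-weak upper gradient of `f` on `E`. -/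
def IsMinimalWUG (μ : Measure X) (p : ℝ) (E : Set X) (f : X → EReal)
    (g : X → ℝ≥0∞) : Prop :=
  IsWeakUpperGradOn μ p f g E ∧
  (∀ x ∈ E, ∃ r > 0, (∫⁻ y in Metric.ball x r ∩ E, g y ^ p ∂μ) < ∞) ∧
  ∀ h : X → ℝ≥0∞, IsWeakUpperGradOn μ p f h E →
    (∀ x ∈ E, ∃ r > 0, (∫⁻ y in Metric.ball x r ∩ E, h y ^ p ∂μ) < ∞) →
    ∀ᵐ x ∂(μ.restrict E), g x ≤ h x

/-- `f ∈ D^p(E)`: `f` is measurable on `E` and has an upper gradient in `L^p(E)`. -/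
def MemDp (μ : Measure X) (p : ℝ) (E : Set X) (f : X → EReal) : Prop :=
  Measurable (fun x : E => f x) ∧
    ∃ g : X → ℝ≥0∞, IsUpperGradOn f g E ∧ (∫⁻ x in E, g x ^ p ∂μ) < ∞

/-- `f ∈ N^{1,p}(E)`. -/
def MemNp (μ : Measure X) (p : ℝ) (E : Set X) (f : X → EReal) : Prop :=
  Measurable (fun x : E => f x) ∧ (∫⁻ x in E, (f x).abs ^ p ∂μ) < ∞ ∧
    ∃ g : X → ℝ≥0∞, IsUpperGradOn f g E ∧ (∫⁻ x in E, g x ^ p ∂μ) < ∞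

/-- `f ∈ N^{1,p}_loc(E)`. -/
def MemNpLoc (μ : Measure X) (p : ℝ) (E : Set X) (f : X → EReal) : Prop :=
  ∀ x ∈ E, ∃ r > 0, MemNp μ p (Metric.ball x r ∩ E) f

/-- `f ∈ D^p_loc(E)`. -/
def MemDpLoc (μ : Measure X) (p : ℝ) (E : Set X) (f : X → EReal) : Prop :=
  ∀ x ∈ E, ∃ r > 0, MemDp μ p (Metric.ball x r ∩ E) f

/-- The `p`-energy `‖f‖_{N^{1,p}(E)}^p`. -/
def npEnergy (μ : Measure X) (p : ℝ) (E : Set X) (f : X → EReal) : ℝ≥0∞ :=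
  (∫⁻ x in E, (f x).abs ^ p ∂μ) +
    ⨅ (g : X → ℝ≥0∞) (_ : IsUpperGradOn f g E), ∫⁻ x in E, g x ^ p ∂μ

/-- The Sobolev capacity `C_p^X(E)`. -/
def capacity (μ : Measure X) (p : ℝ) (E : Set X) : ℝ≥0∞ :=
  ⨅ (f : X → EReal) (_ : MemNp μ p Set.univ f) (_ : ∀ x ∈ E, f x = 1),
    npEnergy μ p Set.univ f

/-- Standing assumption: `0 < μ(B) < ∞` for all balls `B`. -/
def BallCond (μ : Measure X) : Prop :=
  ∀ (x : X) (r : ℝ), 0 < r → 0 < μ (Metric.ball x r) ∧ μ (Metric.ball x r) < ∞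

/-- `μ` is doubling within `B(x₀, r₀)`, with doubling constant `C₀`. -/
def DoublingWithin (μ : Measure X) (C₀ : ℝ≥0) (x₀ : X) (r₀ : ℝ) : Prop :=
  ∀ (x : X) (r : ℝ), 0 < r → Metric.ball x r ⊆ Metric.ball x₀ r₀ →
    μ (Metric.ball x (2 * r)) ≤ (C₀ : ℝ≥0∞) * μ (Metric.ball x r)

/-- `μ` is locally doubling. -/
def LocallyDoubling (μ : Measure X) : Prop :=
  ∀ x : X, ∃ r > 0, ∃ C₀ : ℝ≥0, DoublingWithin μ C₀ x r

/-- `μ` is semilocally doubling. -/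
def SemilocallyDoubling (μ : Measure X) : Prop :=
  ∀ (x : X) (r : ℝ), 0 < r → ∃ C₀ : ℝ≥0, DoublingWithin μ C₀ x r

/-- `μ` is globally doubling, with doubling constant `C₀`. -/
def GloballyDoubling (μ : Measure X) (C₀ : ℝ≥0) : Prop :=
  ∀ (x : X) (r : ℝ), 0 < r → DoublingWithin μ C₀ x r

/-- Integral average of a nonnegative function over a set. -/
def avg (μ : Measure X) (s : Set X) (h : X → ℝ≥0∞) : ℝ≥0∞ :=
  (∫⁻ x in s, h x ∂μ) / μ s

/-- Integral average of a real-valued function over a set. -/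
def ravg (μ : Measure X) (s : Set X) (u : X → ℝ) : ℝ := ⨍ x in s, u x ∂μ

/-- The `(q,p)`-Poincaré inequality holds within `B(x₀, r₀)`, with constants
`C` and dilation `lam`. -/
def PoincareWithin (μ : Measure X) (q p C lam : ℝ) (x₀ : X) (r₀ : ℝ) : Prop :=
  ∀ (x : X) (r : ℝ), 0 < r → Metric.ball x r ⊆ Metric.ball x₀ r₀ →
    ∀ (u : X → ℝ) (g : X → ℝ≥0∞),
      IntegrableOn u (Metric.ball x (lam * r)) μ →
      IsUpperGradOn (fun y => (u y : EReal)) g (Metric.ball x (lam * r)) →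
      (avg μ (Metric.ball x r)
          fun y => ENNReal.ofReal |u y - ravg μ (Metric.ball x r) u| ^ q) ^ (1 / q)
        ≤ ENNReal.ofReal (C * r) *
            (avg μ (Metric.ball x (lam * r)) fun y => g y ^ p) ^ (1 / p)

/-- `X` supports a local `(q,p)`-Poincaré inequality. -/
def LocalPoincare (μ : Measure X) (q p : ℝ) : Prop :=
  ∀ x : X, ∃ r > 0, ∃ C > 0, ∃ lam ≥ (1 : ℝ), PoincareWithin μ q p C lam x r

/-- `X` supports a semilocal `(q,p)`-Poincaré inequality. -/
def SemilocalPoincare (μ : Measure X) (q p : ℝ) : Prop :=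
  ∀ (x : X) (r : ℝ), 0 < r → ∃ C > 0, ∃ lam ≥ (1 : ℝ), PoincareWithin μ q p C lam x r

/-- `X` supports a global `(q,p)`-Poincaré inequality with constants `C`, `lam`. -/
def GlobalPoincare (μ : Measure X) (q p C lam : ℝ) : Prop :=
  ∀ (x : X) (r : ℝ), 0 < r → PoincareWithin μ q p C lam x r

/-- `G` is `p`-path open: for `p`-a.e. curve `γ`, the set `γ⁻¹(G)` is relatively
open in `[0, l_γ]`. -/
def PPathOpen (μ : Measure X) (p : ℝ) (G : Set X) : Prop :=
  ZeroMod μ p {γ : Curve X | ¬ ∃ U : Set ℝ, IsOpen U ∧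
    γ.toFun ⁻¹' G ∩ Set.Icc 0 γ.len = U ∩ Set.Icc 0 γ.len}

/-- `G` is `p`-path almost open: for `p`-a.e. curve `γ`, the set `γ⁻¹(G)` is the
union of a relatively open subset of `[0, l_γ]` and a set of `1`-dimensional
Hausdorff (i.e. Lebesgue) measure zero. -/
def PPathAlmostOpen (μ : Measure X) (p : ℝ) (G : Set X) : Prop :=
  ZeroMod μ p {γ : Curve X | ¬ ∃ U Z : Set ℝ, IsOpen U ∧ volume Z = 0 ∧
    Z ⊆ Set.Icc 0 γ.len ∧
    γ.toFun ⁻¹' G ∩ Set.Icc 0 γ.len = (U ∩ Set.Icc 0 γ.len) ∪ Z}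

/-- `x` is an `L^p`-Lebesgue point of `u`. -/
def LebPoint (μ : Measure X) (p : ℝ) (u : X → EReal) (x : X) : Prop :=
  Tendsto (fun r : ℝ => avg μ (Metric.ball x r) fun y => ((u y - u x).abs) ^ p)
    (𝓝[>] (0 : ℝ)) (𝓝 0)

/-- `u` is quasicontinuous on `X`. -/
def Quasicontinuous (μ : Measure X) (p : ℝ) (u : X → EReal) : Prop :=
  ∀ ε : ℝ≥0∞, 0 < ε → ∃ G : Set X, IsOpen G ∧ capacity μ p G < ε ∧
    (∀ x, x ∉ G → u x ≠ ⊤ ∧ u x ≠ ⊥) ∧ ContinuousOn u Gᶜ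

/-- Positive distance between two sets (vacuously true if `E = ∅`). -/
def distPos (G E : Set X) : Prop :=
  ∃ δ : ℝ, 0 < δ ∧ ∀ x ∈ G, ∀ y ∈ E, δ ≤ dist x y

/-- The family `G_dist(Ω)` of bounded open `G ⊆ Ω` with `dist(G, X∖Ω) > 0`. -/
def Gdist (Ω : Set X) : Set (Set X) :=
  {G | IsOpen G ∧ Bornology.IsBounded G ∧ G ⊆ Ω ∧ distPos G Ωᶜ}

/-- `φ ∈ N^{1,p}_0(G)` (extended by zero outside `G`). -/
def MemN0 (μ : Measure X) (p : ℝ) (G : Set X) (φ : X → EReal) : Prop :=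
  MemNp μ p Set.univ φ ∧ ∀ x, x ∉ G → φ x = 0

/-- `φ ∈ N^{1,p}_{0,dist}(Ω)`: the closure in `N^{1,p}(X)` of the functions
vanishing outside some `G ∈ G_dist(Ω)`. -/
def MemN0dist (μ : Measure X) (p : ℝ) (Ω : Set X) (φ : X → EReal) : Prop :=
  MemNp μ p Set.univ φ ∧
    ∀ ε : ℝ≥0∞, 0 < ε → ∃ ψ : X → EReal, (∃ G ∈ Gdist Ω, MemN0 μ p G ψ) ∧
      npEnergy μ p Set.univ (fun x => φ x - ψ x) < ε

/-- `u` is a `Q`-quasiminimizer in `Ω`, tested by `φ ∈ N^{1,p}_{0,dist}(Ω)`. -/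
def QuasiMinimizerDist (μ : Measure X) (p Q : ℝ) (Ω : Set X) (u : X → EReal) : Prop :=
  ∀ φ : X → EReal, MemN0dist μ p Ω φ →
    ∀ gu gv : X → ℝ≥0∞, IsMinimalWUG μ p Ω u gu →
      IsMinimalWUG μ p Ω (fun x => u x + φ x) gv →
      (∫⁻ x in {x ∈ Ω | φ x ≠ 0}, gu x ^ p ∂μ) ≤
        ENNReal.ofReal Q * ∫⁻ x in {x ∈ Ω | φ x ≠ 0}, gv x ^ p ∂μ

/-- `u` is a `Q`-quasisuperminimizer in `Ω`, tested by nonnegative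
`φ ∈ N^{1,p}_{0,dist}(Ω)`. -/
def QuasiSuperminimizerDist (μ : Measure X) (p Q : ℝ) (Ω : Set X) (u : X → EReal) : Prop :=
  ∀ φ : X → EReal, MemN0dist μ p Ω φ → (∀ x, 0 ≤ φ x) →
    ∀ gu gv : X → ℝ≥0∞, IsMinimalWUG μ p Ω u gu →
      IsMinimalWUG μ p Ω (fun x => u x + φ x) gv →
      (∫⁻ x in {x ∈ Ω | φ x ≠ 0}, gu x ^ p ∂μ) ≤
        ENNReal.ofReal Q * ∫⁻ x in {x ∈ Ω | φ x ≠ 0}, gv x ^ p ∂μ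

/-- `ess liminf_{y → x} v(y)` (with respect to `μ`). -/
def essLiminfAt (μ : Measure X) (v : X → EReal) (x : X) : EReal :=
  ⨆ (r : ℝ) (_ : 0 < r), essInf v (μ.restrict (Metric.ball x r))

/-- `v` is lsc-regularized on `Ω`. -/
def LscRegularizedOn (μ : Measure X) (v : X → EReal) (Ω : Set X) : Prop :=
  ∀ x ∈ Ω, v x = essLiminfAt (μ.restrict Ω) v x

/-- The nonnegative part of an extended real, as an element of `ℝ≥0∞`. -/
def erealPos (x : EReal) : ℝ≥0∞ := if x = ⊤ then ⊤ else ENNReal.ofReal x.toReal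

/-- The integral average `⨍_S u dμ` of an `ℝ̄`-valued function. -/
def erealAvg (μ : Measure X) (S : Set X) (u : X → EReal) : EReal :=
  (((∫⁻ x in S, erealPos (u x) ∂μ) / μ S : ℝ≥0∞) : EReal) -
    (((∫⁻ x in S, erealPos (-(u x)) ∂μ) / μ S : ℝ≥0∞) : EReal)

/-- `Ω^∧ = X̂ ∖ cl_{X̂}(X ∖ Ω)`, the largest open subset of the completion `X̂`
with `Ω^∧ ∩ X = Ω`. -/
def hatSet (Ω : Set X) : Set (Completion X) :=
  (closure (((↑) : X → Completion X) '' Ωᶜ))ᶜ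

/-- The function `x ↦ limsup_{r → 0} ⨍_{B̂(x,r) ∩ X} u dμ` on the completion. -/
def hatLimsupExt (μ : Measure X) (u : X → EReal) : Completion X → EReal :=
  fun x => limsup
    (fun r : ℝ => erealAvg μ (((↑) : X → Completion X) ⁻¹' Metric.ball x r) u)
    (𝓝[>] (0 : ℝ))



section AuxLemmas
open Filter

lemma lintegral_le_liminf_exhaust {Y : Type*} [MeasurableSpace Y] (μ : Measure Y)
    {f : Y → ℝ≥0∞} (hf : Measurable f) {S : Set Y} (hS : MeasurableSet S)
    {B : ℕ → Set Y} (hB : ∀ n, MeasurableSet (B n))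
    (hex : ∀ y ∈ S, ∀ᶠ n in atTop, y ∈ B n) :
    ∫⁻ y in S, f y ∂μ ≤ liminf (fun n => ∫⁻ y in B n, f y ∂μ) atTop := by
  have h1 : ∫⁻ y in S, f y ∂μ ≤ ∫⁻ y, liminf (fun n => (B n).indicator f y) atTop ∂μ := by
    rw [← lintegral_indicator hS]
    refine lintegral_mono fun y => ?_
    by_cases hy : y ∈ S
    · have hev : (fun n => (B n).indicator f y) =ᶠ[atTop] (fun _ => f y) :=
        (hex y hy).mono fun n hn => Set.indicator_of_mem hn f
      rw [Set.indicator_of_mem hy, liminf_congr hev, liminf_const]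
    · simp [Set.indicator_of_notMem hy]
  refine h1.trans ?_
  refine (lintegral_liminf_le fun n => hf.indicator (hB n)).trans (le_of_eq ?_)
  exact liminf_congr (Eventually.of_forall fun n => lintegral_indicator (hB n) f)

lemma measure_le_liminf_exhaust {Y : Type*} [MeasurableSpace Y] (μ : Measure Y)
    {S : Set Y} (hS : MeasurableSet S)
    {B : ℕ → Set Y} (hB : ∀ n, MeasurableSet (B n))
    (hex : ∀ y ∈ S, ∀ᶠ n in atTop, y ∈ B n) :
    μ S ≤ liminf (fun n => μ (B n)) atTop := by
  have := lintegral_le_liminf_exhaust μ (measurable_const (a := (1:ℝ≥0∞))) hS hB hex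
  simpa [setLIntegral_one] using this

lemma ennreal_add_rpow_le {x y : ℝ≥0∞} {q : ℝ} (hq : 0 ≤ q) :
    (x + y) ^ q ≤ 2 ^ q * (x ^ q + y ^ q) := by
  have h1 : x + y ≤ 2 * max x y := by
    rcases le_total x y with hxy | hxy
    · calc x + y ≤ y + y := by gcongr
        _ = 2 * y := (two_mul y).symm
        _ ≤ 2 * max x y := by gcongr; exact le_max_right _ _
    · calc x + y ≤ x + x := by gcongr
        _ = 2 * x := (two_mul x).symm
        _ ≤ 2 * max x y := by gcongr; exact le_max_left _ _
  calc (x + y) ^ q ≤ (2 * max x y) ^ q := ENNReal.rpow_le_rpow h1 hq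
    _ = 2 ^ q * (max x y) ^ q := ENNReal.mul_rpow_of_nonneg _ _ hq
    _ ≤ 2 ^ q * (x ^ q + y ^ q) := by
        gcongr
        rcases le_total x y with hxy | hxy
        · rw [max_eq_right hxy]; exact le_add_self
        · rw [max_eq_left hxy]; exact self_le_add_right _ _

end AuxLemmas

/-- If `X` supports a semilocal `(q,p)`-Poincaré inequality, then so
does its completion `X̂` (with the extended measure). -/
theorem statement4 {X : Type u} [MetricSpace X] [MeasurableSpace X] [BorelSpace X]
    [MeasurableSpace (Completion X)] [BorelSpace (Completion X)]
    (μ : Measure X) (hμ : BallCond μ)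
    (q p : ℝ) (hq : 1 ≤ q) (hp : 1 ≤ p)
    (h : SemilocalPoincare μ q p) :
    SemilocalPoincare (μ.map ((↑) : X → Completion X)) q p := by
  classical
  have hiso : Isometry ((↑) : X → Completion X) := UniformSpace.Completion.coe_isometry
  have hcont : Continuous ((↑) : X → Completion X) := hiso.continuous
  have hmι : Measurable ((↑) : X → Completion X) := hcont.measurable
  have hdense : DenseRange ((↑) : X → Completion X) := UniformSpace.Completion.denseRange_coe
  have hq0 : (0:ℝ) < q := lt_of_lt_of_le one_pos hq
  have hp0 : (0:ℝ) < p := lt_of_lt_of_le one_pos hp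
  intro x₀ r₀ hr₀
  obtain ⟨y₀, hy₀⟩ := hdense.exists_dist_lt x₀ hr₀
  obtain ⟨C, hC, lam, hlam, hPI⟩ := h y₀ (3 * r₀) (by linarith)
  have hlam0 : (0:ℝ) < lam := lt_of_lt_of_le one_pos hlam
  refine ⟨4 * C, by positivity, lam, hlam, ?_⟩
  intro x r hr hball u g hu hg
  -- approximating centers and radii
  have hsel : ∀ n : ℕ, ∃ y : X, dist x ((y : Completion X)) < r / ((n:ℝ) + 2) := fun n =>
    hdense.exists_dist_lt x (by positivity)
  choose z hz using hsel
  obtain ⟨rn, hrn⟩ : ∃ rn : ℕ → ℝ, ∀ n, rn n = r - r / ((n : ℝ) + 2) := ⟨_, fun _ => rfl⟩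
  have hrecip_pos : ∀ n : ℕ, 0 < r / ((n:ℝ) + 2) := fun n => by positivity
  have hrecip_le : ∀ n : ℕ, r / ((n:ℝ) + 2) ≤ r / 2 := fun n => by
    apply div_le_div_of_nonneg_left hr.le (by norm_num)
    · norm_num
  have hrn_pos : ∀ n, 0 < rn n := fun n => by
    have h1 := hrecip_le n; rw [hrn]; linarith
  have hrn_lt : ∀ n, rn n < r := fun n => by
    have h1 := hrecip_pos n; rw [hrn]; linarith
  have hrecip0 : Tendsto (fun n : ℕ => r / ((n:ℝ) + 2)) atTop (𝓝 0) :=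
    Tendsto.div_atTop tendsto_const_nhds
      (tendsto_atTop_add_const_right _ 2 tendsto_natCast_atTop_atTop)
  obtain ⟨S, hS⟩ : ∃ S : Set X, S = ((↑) : X → Completion X) ⁻¹' Metric.ball x r := ⟨_, rfl⟩
  obtain ⟨Sl, hSl⟩ : ∃ Sl : Set X,
      Sl = ((↑) : X → Completion X) ⁻¹' Metric.ball x (lam * r) := ⟨_, rfl⟩
  have hSmem : ∀ y : X, y ∈ S ↔ dist ((y : Completion X)) x < r := fun y => by
    rw [hS]; exact Iff.rfl
  have hSlmem : ∀ y : X, y ∈ Sl ↔ dist ((y : Completion X)) x < lam * r := fun y => by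
    rw [hSl]; exact Iff.rfl
  have hSmeas : MeasurableSet S := hS ▸ (isOpen_ball.preimage hcont).measurableSet
  have hSlmeas : MeasurableSet Sl := hSl ▸ (isOpen_ball.preimage hcont).measurableSet
  obtain ⟨Bn, hBn⟩ : ∃ Bn : ℕ → Set X, ∀ n, Bn n = Metric.ball (z n) (rn n) :=
    ⟨_, fun _ => rfl⟩
  obtain ⟨Ln, hLn⟩ : ∃ Ln : ℕ → Set X, ∀ n, Ln n = Metric.ball (z n) (lam * rn n) :=
    ⟨_, fun _ => rfl⟩
  have hdist_eq : ∀ a b : X, dist ((a : Completion X)) ((b : Completion X)) = dist a b :=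
    fun a b => hiso.dist_eq a b
  have htri : ∀ (n : ℕ) (y : X),
      dist ((y : Completion X)) x ≤ dist y (z n) + dist x ((z n : Completion X)) := by
    intro n y
    calc dist ((y : Completion X)) x
        ≤ dist ((y : Completion X)) ((z n : Completion X)) + dist ((z n : Completion X)) x :=
          dist_triangle _ _ _
      _ = dist y (z n) + dist x ((z n : Completion X)) := by
          rw [hdist_eq, dist_comm ((z n : Completion X)) x]
  have htri' : ∀ (n : ℕ) (y : X),
      dist y (z n) ≤ dist ((y : Completion X)) x + dist x ((z n : Completion X)) := by
    intro n y
    calc dist y (z n) = dist ((y : Completion X)) ((z n : Completion X)) := (hdist_eq _ _).symm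
      _ ≤ dist ((y : Completion X)) x + dist x ((z n : Completion X)) := dist_triangle _ _ _
  have hBnS : ∀ n, Bn n ⊆ S := by
    intro n y hy
    rw [hBn, mem_ball] at hy
    rw [hSmem]
    have h1 := hrn n
    have h2 := hz n
    have h3 := htri n y
    linarith
  have hLnSl : ∀ n, Ln n ⊆ Sl := by
    intro n y hy
    rw [hLn, mem_ball] at hy
    rw [hSlmem]
    have h1 := hrn n
    have h2 := hz n
    have h3 := htri n y
    have h4 : r / ((n:ℝ) + 2) ≤ lam * (r / ((n:ℝ) + 2)) :=
      le_mul_of_one_le_left (hrecip_pos n).le hlam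
    have h5 : lam * rn n + lam * (r / ((n:ℝ) + 2)) = lam * r := by
      rw [hrn]; ring
    linarith
  have hSSl : S ⊆ Sl := by
    intro y hy
    rw [hSmem] at hy
    rw [hSlmem]
    have : r ≤ lam * r := le_mul_of_one_le_left hr.le hlam
    linarith
  have hexS : ∀ y ∈ S, ∀ᶠ n in atTop, y ∈ Bn n := by
    intro y hy
    rw [hSmem] at hy
    have hev : ∀ᶠ n : ℕ in atTop,
        r / ((n:ℝ) + 2) < (r - dist ((y : Completion X)) x) / 2 :=
      hrecip0.eventually (gt_mem_nhds (by linarith))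
    filter_upwards [hev] with n hn
    rw [hBn, mem_ball, hrn]
    have h2 := hz n
    have h3 := htri' n y
    linarith
  have hexSl : ∀ y ∈ Sl, ∀ᶠ n in atTop, y ∈ Ln n := by
    intro y hy
    rw [hSlmem] at hy
    have hpos : 0 < (lam * r - dist ((y : Completion X)) x) / (lam + 1) :=
      div_pos (by linarith) (by linarith)
    have hev : ∀ᶠ n : ℕ in atTop,
        r / ((n:ℝ) + 2) < (lam * r - dist ((y : Completion X)) x) / (lam + 1) :=
      hrecip0.eventually (gt_mem_nhds hpos)
    filter_upwards [hev] with n hn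
    rw [hLn, mem_ball]
    have h2 := hz n
    have h3 := htri' n y
    have h4 : r / ((n:ℝ) + 2) * (lam + 1) < lam * r - dist ((y : Completion X)) x :=
      (lt_div_iff₀ (by linarith)).mp hn
    have h5 : lam * rn n = lam * r - lam * (r / ((n:ℝ) + 2)) := by
      rw [hrn]; ring
    nlinarith [hrecip_pos n]
  -- measure facts
  have hmuBn_pos : ∀ n, 0 < μ (Bn n) := fun n => hBn n ▸ (hμ (z n) (rn n) (hrn_pos n)).1
  have hmuLn_pos : ∀ n, 0 < μ (Ln n) := fun n =>
    hLn n ▸ (hμ (z n) (lam * rn n) (mul_pos hlam0 (hrn_pos n))).1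
  have hmuS_pos : 0 < μ S := lt_of_lt_of_le (hmuBn_pos 0) (measure_mono (hBnS 0))
  have hSl_sub : Sl ⊆ Metric.ball (z 0) (lam * r + r) := by
    intro y hy
    rw [hSlmem] at hy
    have h2 := hz 0
    have h3 := htri' 0 y
    have h4 := hrecip_le 0
    rw [mem_ball]
    linarith
  have hmuSl_fin : μ Sl < ∞ :=
    lt_of_le_of_lt (measure_mono hSl_sub)
      (hμ (z 0) (lam * r + r) (by have := mul_pos hlam0 hr; linarith)).2
  have hmuS_fin : μ S < ∞ := lt_of_le_of_lt (measure_mono hSSl) hmuSl_fin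
  have hmuSl_pos : 0 < μ Sl := lt_of_lt_of_le hmuS_pos (measure_mono hSSl)
  -- measurable extension of g from the big ball
  have hball_meas : MeasurableSet (Metric.ball x (lam * r)) := measurableSet_ball
  have hball_meas' : MeasurableSet (Metric.ball x r) := measurableSet_ball
  obtain ⟨G0, hG0⟩ : ∃ G0 : Completion X → ℝ≥0∞,
      G0 = Function.extend (Subtype.val : (Metric.ball x (lam * r) : Set (Completion X)) → _)
        (fun w => g w) (fun _ => 0) := ⟨_, rfl⟩
  have hG0meas : Measurable G0 := by
    rw [hG0]
    exact (MeasurableEmbedding.subtype_coe hball_meas).measurable_extend hg.1 measurable_const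
  have hG0eq : ∀ w ∈ Metric.ball x (lam * r), G0 w = g w := by
    intro w hw
    rw [hG0]
    have := Subtype.val_injective.extend_apply
      (fun w : (Metric.ball x (lam * r) : Set (Completion X)) => g w) (fun _ => 0) ⟨w, hw⟩
    simpa using this
  obtain ⟨gX, hgXdef⟩ : ∃ gX : X → ℝ≥0∞, gX = fun y : X => G0 ((y : Completion X)) := ⟨_, rfl⟩
  have hgXmeas : Measurable gX := hgXdef ▸ hG0meas.comp hmι
  have hgXeq : ∀ y ∈ Sl, gX y = g ((y : Completion X)) := by
    intro y hy
    rw [hgXdef]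
    exact hG0eq _ ((hSlmem y).mp hy)
  -- transfer of the measure and integrals
  have hmap_ball : ∀ ρ : ℝ, (μ.map ((↑) : X → Completion X)) (Metric.ball x ρ)
      = μ (((↑) : X → Completion X) ⁻¹' Metric.ball x ρ) := fun ρ =>
    Measure.map_apply hmι measurableSet_ball
  have hrestr : (μ.map ((↑) : X → Completion X)).restrict (Metric.ball x (lam * r))
      = (μ.restrict Sl).map ((↑) : X → Completion X) := by
    rw [Measure.restrict_map hmι hball_meas, hSl]
  have hrestr' : (μ.map ((↑) : X → Completion X)).restrict (Metric.ball x r)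
      = (μ.restrict S).map ((↑) : X → Completion X) := by
    rw [Measure.restrict_map hmι hball_meas', hS]
  -- integrability of u ∘ ι on Sl
  have huSl : Integrable (fun y : X => u ((y : Completion X))) (μ.restrict Sl) := by
    have h1 : Integrable u ((μ.restrict Sl).map ((↑) : X → Completion X)) := by
      rw [← hrestr]; exact hu
    exact (integrable_map_measure h1.aestronglyMeasurable hmι.aemeasurable).mp h1
  -- measurable a.e. representative v
  obtain ⟨v, hvmeas, hvae⟩ : ∃ v : X → ℝ, Measurable v ∧
      (fun y : X => u ((y : Completion X))) =ᶠ[ae (μ.restrict Sl)] v :=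
    ⟨huSl.1.mk _, huSl.1.stronglyMeasurable_mk.measurable, huSl.1.ae_eq_mk⟩
  have hvae_sub : ∀ {t : Set X}, t ⊆ Sl →
      (fun y : X => u ((y : Completion X))) =ᶠ[ae (μ.restrict t)] v := fun ht =>
    ae_restrict_of_ae_restrict_of_subset ht hvae
  have hv_int : Integrable v (μ.restrict Sl) := huSl.congr hvae
  have hv_int_sub : ∀ {t : Set X}, t ⊆ Sl → Integrable v (μ.restrict t) := by
    intro t ht
    exact hv_int.mono_measure (Measure.restrict_mono ht le_rfl)
  -- the averages
  obtain ⟨c, hc⟩ : ∃ c : ℝ, c = ⨍ y in S, v y ∂μ := ⟨_, rfl⟩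
  obtain ⟨cn, hcn⟩ : ∃ cn : ℕ → ℝ, ∀ n, cn n = ⨍ y in Bn n, v y ∂μ := ⟨_, fun _ => rfl⟩
  have hAESM_S : AEStronglyMeasurable u ((μ.restrict S).map ((↑) : X → Completion X)) := by
    rw [← hrestr']
    exact hu.aestronglyMeasurable.mono_measure
      (Measure.restrict_mono (Metric.ball_subset_ball
        (by nlinarith : r ≤ lam * r)) le_rfl)
  have hravg : ravg (μ.map ((↑) : X → Completion X)) (Metric.ball x r) u = c := by
    rw [hc, ravg, setAverage_eq, setAverage_eq, measureReal_def, measureReal_def, hmap_ball, ← hS]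
    congr 1
    rw [hrestr', integral_map hmι.aemeasurable hAESM_S]
    exact integral_congr_ae (hvae_sub hSSl)
  have hphi_meas : Measurable (fun t : ℝ => (ENNReal.ofReal |t - c|) ^ q) := by
    fun_prop
  have hLHSnum : ∫⁻ w in Metric.ball x r, (ENNReal.ofReal |u w - c|) ^ q
        ∂(μ.map ((↑) : X → Completion X))
      = ∫⁻ y in S, (ENNReal.ofReal |v y - c|) ^ q ∂μ := by
    rw [hrestr']
    rw [lintegral_map' (f := fun w => (ENNReal.ofReal |u w - c|) ^ q)
      (hphi_meas.comp_aemeasurable hAESM_S.aemeasurable) hmι.aemeasurable]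
    refine lintegral_congr_ae ((hvae_sub hSSl).mono fun y hy => ?_)
    have hy' : u ((y : Completion X)) = v y := hy
    simp only
    rw [hy']
  have hrpow_meas : Measurable (fun t : ℝ≥0∞ => t ^ p) := by fun_prop
  have hRHSnum : ∫⁻ w in Metric.ball x (lam * r), g w ^ p ∂(μ.map ((↑) : X → Completion X))
      = ∫⁻ y in Sl, gX y ^ p ∂μ := by
    have h1 : ∫⁻ w in Metric.ball x (lam * r), g w ^ p ∂(μ.map ((↑) : X → Completion X))
        = ∫⁻ w in Metric.ball x (lam * r), G0 w ^ p ∂(μ.map ((↑) : X → Completion X)) :=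
      setLIntegral_congr_fun hball_meas (fun w hw => by simp only [hG0eq w hw])
    rw [h1, hrestr, lintegral_map (f := fun w => G0 w ^ p) (hrpow_meas.comp hG0meas) hmι]
    simp only [hgXdef]
  -- inclusion of the approximating balls in the reference ball of X
  have hBn_sub : ∀ n, Metric.ball (z n) (rn n) ⊆ Metric.ball y₀ (3 * r₀) := by
    intro n y hy
    have h1 : y ∈ S := hBnS n (by rw [hBn]; exact hy)
    have h2 : ((y : Completion X)) ∈ Metric.ball x₀ r₀ :=
      hball (mem_ball.mpr ((hSmem y).mp h1))
    rw [mem_ball] at h2 ⊢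
    have h3 : dist y y₀ ≤ dist ((y : Completion X)) x₀ + dist x₀ ((y₀ : Completion X)) := by
      calc dist y y₀ = dist ((y : Completion X)) ((y₀ : Completion X)) := (hdist_eq _ _).symm
        _ ≤ _ := dist_triangle _ _ _
    linarith
  -- transfer of the upper gradient property
  have hug : ∀ n, IsUpperGradOn (fun y : X => ((u ((y : Completion X)) : ℝ) : EReal)) gX
      (Metric.ball (z n) (lam * rn n)) := by
    intro n
    constructor
    · exact hgXmeas.comp measurable_subtype_coe
    · intro γ hγ
      have hγSl : ∀ t ∈ Set.Icc (0:ℝ) γ.len, γ.toFun t ∈ Sl := fun t ht =>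
        hLnSl n (by rw [hLn]; exact hγ t ht)
      obtain ⟨γc, hγc_len, hγc_fun⟩ : ∃ γc : Curve (Completion X), γc.len = γ.len ∧
          γc.toFun = fun t => ((γ.toFun t : X) : Completion X) := by
        refine ⟨⟨γ.len, γ.len_pos, fun t => ((γ.toFun t : X) : Completion X), ?_, ?_⟩, rfl, rfl⟩
        · have := hiso.lipschitz.comp_lipschitzOnWith γ.lip
          simpa [Function.comp_def] using this
        · obtain ⟨t, ht, hne⟩ := γ.nonconst
          exact ⟨t, ht, fun hcon => hne (hiso.injective hcon)⟩
      have hγcIn : γc.In (Metric.ball x (lam * r)) := by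
        intro t ht
        rw [hγc_fun]
        rw [hγc_len] at ht
        exact mem_ball.mpr ((hSlmem _).mp (hγSl t ht))
      have h2 := hg.2 γc hγcIn
      have h3 : γc.lineIntegral g = γ.lineIntegral gX := by
        unfold Curve.lineIntegral
        rw [hγc_len, hγc_fun]
        refine setLIntegral_congr_fun measurableSet_Icc (fun t ht => ?_)
        exact (hgXeq _ (hγSl t ht)).symm
      unfold ugIneq at h2 ⊢
      rw [h3] at h2
      rw [hγc_fun, hγc_len] at h2
      exact h2
  have hint : ∀ n, IntegrableOn (fun y : X => u ((y : Completion X)))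
      (Metric.ball (z n) (lam * rn n)) μ := by
    intro n
    exact huSl.mono_measure (Measure.restrict_mono (by rw [← hLn]; exact hLnSl n) le_rfl)
  have hsubBnSl : ∀ n, Metric.ball (z n) (rn n) ⊆ Sl := fun n => by
    rw [← hBn]; exact (hBnS n).trans hSSl
  -- the Poincaré inequality on the approximating balls, with v and cn
  have hkey : ∀ n,
      (avg μ (Metric.ball (z n) (rn n)) fun y => ENNReal.ofReal |v y - cn n| ^ q) ^ (1 / q)
        ≤ ENNReal.ofReal (C * rn n) *
            (avg μ (Metric.ball (z n) (lam * rn n)) fun y => gX y ^ p) ^ (1 / p) := by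
    intro n
    have h0 := hPI (z n) (rn n) (hrn_pos n) (hBn_sub n)
      (fun y : X => u ((y : Completion X))) gX (hint n) (hug n)
    have h1 : ravg μ (Metric.ball (z n) (rn n)) (fun y : X => u ((y : Completion X)))
        = cn n := by
      rw [hcn n, hBn n]
      exact average_congr (hvae_sub (hsubBnSl n))
    rw [h1] at h0
    have h2 : (avg μ (Metric.ball (z n) (rn n)) fun y =>
          ENNReal.ofReal |u ((y : Completion X)) - cn n| ^ q)
        = (avg μ (Metric.ball (z n) (rn n)) fun y =>
          ENNReal.ofReal |v y - cn n| ^ q) := by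
      unfold avg
      congr 1
      refine lintegral_congr_ae ((hvae_sub (hsubBnSl n)).mono fun y hy => ?_)
      have hy' : u ((y : Completion X)) = v y := hy
      simp only
      rw [hy']
    rw [h2] at h0
    exact h0
  -- measurability of sets and integrands
  have hBmeas : ∀ n, MeasurableSet (Bn n) := fun n => hBn n ▸ measurableSet_ball
  have hLmeas : ∀ n, MeasurableSet (Ln n) := fun n => hLn n ▸ measurableSet_ball
  have hrpow_measq : Measurable (fun t : ℝ≥0∞ => t ^ q) := by fun_prop
  have hFmeas : ∀ d : ℝ, Measurable (fun y : X => ENNReal.ofReal |v y - d| ^ q) := fun d =>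
    hrpow_measq.comp ((hvmeas.sub measurable_const).abs.ennreal_ofReal)
  -- convergence of the measures of the approximating balls
  have hmuBn_le : ∀ n, μ (Bn n) ≤ μ S := fun n => measure_mono (hBnS n)
  have hmuBn_lim : Tendsto (fun n => μ (Bn n)) atTop (𝓝 (μ S)) := by
    refine tendsto_of_le_liminf_of_limsup_le ?_ ?_
    · exact measure_le_liminf_exhaust μ hSmeas hBmeas hexS
    · exact limsup_le_of_le (by isBoundedDefault) (Eventually.of_forall hmuBn_le)
  have hmuBn_toReal : Tendsto (fun n => (μ (Bn n)).toReal) atTop (𝓝 (μ S).toReal) :=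
    (ENNReal.tendsto_toReal hmuS_fin.ne).comp hmuBn_lim
  -- convergence of the integrals of v over the approximating balls
  have hIntBn_lim : Tendsto (fun n => ∫ y in Bn n, v y ∂μ) atTop (𝓝 (∫ y in S, v y ∂μ)) := by
    have hbound : Integrable (S.indicator (fun y => |v y|)) μ :=
      (integrable_indicator_iff hSmeas).mpr ((hv_int_sub hSSl).abs)
    have hdct := tendsto_integral_of_dominated_convergence
      (F := fun n => (Bn n).indicator v) (f := S.indicator v) (μ := μ)
      (S.indicator (fun y => |v y|))
      (fun n => (hvmeas.indicator (hBmeas n)).aestronglyMeasurable)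
      hbound
      (fun n => ae_of_all _ fun y => ?_)
      (ae_of_all _ fun y => ?_)
    · have h1 : ∀ n, ∫ y, (Bn n).indicator v y ∂μ = ∫ y in Bn n, v y ∂μ :=
        fun n => integral_indicator (hBmeas n)
      have h2 : ∫ y, S.indicator v y ∂μ = ∫ y in S, v y ∂μ := integral_indicator hSmeas
      rw [h2] at hdct
      exact hdct.congr h1
    · show ‖(Bn n).indicator v y‖ ≤ S.indicator (fun y => |v y|) y
      by_cases hy : y ∈ Bn n
      · rw [Set.indicator_of_mem hy, Set.indicator_of_mem (hBnS n hy)]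
        exact le_of_eq rfl
      · rw [Set.indicator_of_notMem hy]
        simp only [norm_zero]
        exact Set.indicator_apply_nonneg (fun _ => abs_nonneg _)
    · show Tendsto (fun n => (Bn n).indicator v y) atTop (𝓝 (S.indicator v y))
      by_cases hy : y ∈ S
      · rw [Set.indicator_of_mem hy]
        refine Tendsto.congr' ?_ tendsto_const_nhds
        exact ((hexS y hy).mono fun n hn => (Set.indicator_of_mem hn v).symm)
      · rw [Set.indicator_of_notMem hy]
        have h3 : ∀ n, (Bn n).indicator v y = 0 :=
          fun n => Set.indicator_of_notMem (fun hc => hy (hBnS n hc)) v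
        simpa [h3] using (tendsto_const_nhds : Tendsto (fun _ : ℕ => (0:ℝ)) atTop (𝓝 0))
  -- convergence of the averages
  have hcn_lim : Tendsto cn atTop (𝓝 c) := by
    have h1 : ∀ n, cn n = ((μ (Bn n)).toReal)⁻¹ • ∫ y in Bn n, v y ∂μ := fun n => by
      rw [hcn n, setAverage_eq, measureReal_def]
    have h2 : c = ((μ S).toReal)⁻¹ • ∫ y in S, v y ∂μ := by rw [hc, setAverage_eq, measureReal_def]
    rw [h2]
    refine Tendsto.congr (fun n => (h1 n).symm) ?_
    exact Tendsto.smul (hmuBn_toReal.inv₀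
      (ENNReal.toReal_ne_zero.mpr ⟨hmuS_pos.ne', hmuS_fin.ne⟩)) hIntBn_lim
  have hen_lim : Tendsto (fun n => |cn n - c|) atTop (𝓝 0) := by
    have := (hcn_lim.sub (tendsto_const_nhds (x := c))).abs
    simpa using this
  -- eventual lower bound for the measures of the enlarged balls
  have hev_Ln : ∀ᶠ n in atTop, μ Sl / 2 < μ (Ln n) :=
    eventually_lt_of_lt_liminf
      (lt_of_lt_of_le (ENNReal.half_lt_self hmuSl_pos.ne' hmuSl_fin.ne)
        (measure_le_liminf_exhaust μ hSlmeas hLmeas hexSl))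
  -- rewrite the goal in terms of X-side quantities
  obtain ⟨Il, hIl⟩ : ∃ Il : ℝ≥0∞, Il = ∫⁻ y in Sl, gX y ^ p ∂μ := ⟨_, rfl⟩
  obtain ⟨Iq, hIq⟩ : ∃ Iq : ℝ≥0∞, Iq = ∫⁻ y in S, ENNReal.ofReal |v y - c| ^ q ∂μ := ⟨_, rfl⟩
  have hgoalL : (avg (μ.map ((↑) : X → Completion X)) (Metric.ball x r) fun w =>
      ENNReal.ofReal |u w - ravg (μ.map ((↑) : X → Completion X)) (Metric.ball x r) u| ^ q)
      = Iq / μ S := by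
    unfold avg
    rw [hravg, hLHSnum, hmap_ball, ← hS, ← hIq]
  have hgoalR : (avg (μ.map ((↑) : X → Completion X)) (Metric.ball x (lam * r)) fun w =>
      g w ^ p) = Il / μ Sl := by
    unfold avg
    rw [hRHSnum, hmap_ball, ← hSl, ← hIl]
  rw [hgoalL, hgoalR]
  -- the trivial case of infinite energy
  by_cases hItop : Il = ∞
  · have h1 : Il / μ Sl = ∞ := by
      rw [hItop]
      exact ENNReal.top_div_of_ne_top hmuSl_fin.ne
    rw [h1, ENNReal.top_rpow_of_pos (by positivity : (0:ℝ) < 1 / p),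
      ENNReal.mul_top (ENNReal.ofReal_pos.mpr (by positivity)).ne']
    exact le_top
  -- main case
  obtain ⟨K, hK⟩ : ∃ K : ℝ≥0∞,
      K = ENNReal.ofReal (C * r) ^ q * (2 ^ q * (Il / μ Sl) ^ (q / p)) := ⟨_, rfl⟩
  -- eventual bound from the Poincaré inequality
  have hevA : ∀ᶠ n in atTop,
      (∫⁻ y in Bn n, ENNReal.ofReal |v y - cn n| ^ q ∂μ) ≤ K * μ S := by
    filter_upwards [hev_Ln] with n hn
    have h0 := hkey n
    have h1 : (avg μ (Metric.ball (z n) (rn n)) fun y => ENNReal.ofReal |v y - cn n| ^ q)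
        ≤ (ENNReal.ofReal (C * rn n) *
            (avg μ (Metric.ball (z n) (lam * rn n)) fun y => gX y ^ p) ^ (1 / p)) ^ q := by
      have h2 := ENNReal.rpow_le_rpow h0 hq0.le
      rwa [← ENNReal.rpow_mul, one_div_mul_cancel hq0.ne', ENNReal.rpow_one] at h2
    have h3 : (avg μ (Metric.ball (z n) (lam * rn n)) fun y => gX y ^ p)
        ≤ 2 * (Il / μ Sl) := by
      unfold avg
      have h4 : (∫⁻ y in Metric.ball (z n) (lam * rn n), gX y ^ p ∂μ) ≤ Il := by
        rw [hIl]
        exact lintegral_mono_set (by rw [← hLn]; exact hLnSl n)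
      have h5 : μ Sl / 2 ≤ μ (Metric.ball (z n) (lam * rn n)) := by
        rw [← hLn]; exact hn.le
      calc (∫⁻ y in Metric.ball (z n) (lam * rn n), gX y ^ p ∂μ) /
            μ (Metric.ball (z n) (lam * rn n))
          ≤ Il / (μ Sl / 2) := ENNReal.div_le_div h4 h5
        _ = Il * ((μ Sl)⁻¹ * (2⁻¹)⁻¹) := by
            rw [div_eq_mul_inv, div_eq_mul_inv,
              ENNReal.mul_inv (Or.inl hmuSl_pos.ne') (Or.inl hmuSl_fin.ne)]
        _ = 2 * (Il / μ Sl) := by rw [inv_inv, div_eq_mul_inv]; ring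
    have h6 : (ENNReal.ofReal (C * rn n) *
          (avg μ (Metric.ball (z n) (lam * rn n)) fun y => gX y ^ p) ^ (1 / p)) ^ q ≤ K := by
      rw [ENNReal.mul_rpow_of_nonneg _ _ hq0.le, hK]
      have hexp : (1 / p) * q = q / p := by ring
      refine mul_le_mul' ?_ ?_
      · exact ENNReal.rpow_le_rpow (ENNReal.ofReal_le_ofReal
          (mul_le_mul_of_nonneg_left (hrn_lt n).le hC.le)) hq0.le
      · rw [← ENNReal.rpow_mul, hexp]
        calc (avg μ (Metric.ball (z n) (lam * rn n)) fun y => gX y ^ p) ^ (q / p)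
            ≤ (2 * (Il / μ Sl)) ^ (q / p) :=
              ENNReal.rpow_le_rpow h3 (by positivity)
          _ = 2 ^ (q / p) * (Il / μ Sl) ^ (q / p) :=
              ENNReal.mul_rpow_of_nonneg _ _ (by positivity)
          _ ≤ 2 ^ q * (Il / μ Sl) ^ (q / p) :=
              mul_le_mul_left
                (ENNReal.rpow_le_rpow_of_exponent_le one_le_two (div_le_self hq0.le hp)) _
    have h7 : (avg μ (Metric.ball (z n) (rn n)) fun y => ENNReal.ofReal |v y - cn n| ^ q)
        ≤ K := h1.trans h6
    have h8 : μ (Metric.ball (z n) (rn n)) ≠ 0 := by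
      rw [← hBn]; exact (hmuBn_pos n).ne'
    have h9 : μ (Metric.ball (z n) (rn n)) ≠ ∞ := by
      rw [← hBn]; exact ((hmuBn_le n).trans_lt hmuS_fin).ne
    have h10 : (∫⁻ y in Metric.ball (z n) (rn n), ENNReal.ofReal |v y - cn n| ^ q ∂μ)
        ≤ K * μ (Metric.ball (z n) (rn n)) := by
      have h7' : (∫⁻ y in Metric.ball (z n) (rn n), ENNReal.ofReal |v y - cn n| ^ q ∂μ) /
          μ (Metric.ball (z n) (rn n)) ≤ K := h7
      have h11 := mul_le_mul_left h7' (μ (Metric.ball (z n) (rn n)))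
      rwa [ENNReal.div_mul_cancel h8 h9] at h11
    calc (∫⁻ y in Bn n, ENNReal.ofReal |v y - cn n| ^ q ∂μ)
        = ∫⁻ y in Metric.ball (z n) (rn n), ENNReal.ofReal |v y - cn n| ^ q ∂μ := by rw [hBn]
      _ ≤ K * μ (Metric.ball (z n) (rn n)) := h10
      _ ≤ K * μ S := by
          gcongr
          rw [← hBn]
          exact hBnS n
  -- pointwise comparison
  have hptwise : ∀ (n : ℕ) (y : X), ENNReal.ofReal |v y - c| ^ q
      ≤ 2 ^ q * (ENNReal.ofReal |v y - cn n| ^ q + ENNReal.ofReal |cn n - c| ^ q) := by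
    intro n y
    have h1 : |v y - c| ≤ |v y - cn n| + |cn n - c| := by
      rw [← sub_add_sub_cancel (v y) (cn n) c]
      exact abs_add_le _ _
    have h2 : ENNReal.ofReal |v y - c|
        ≤ ENNReal.ofReal |v y - cn n| + ENNReal.ofReal |cn n - c| :=
      le_trans (ENNReal.ofReal_le_ofReal h1) ENNReal.ofReal_add_le
    exact le_trans (ENNReal.rpow_le_rpow h2 hq0.le) (ennreal_add_rpow_le hq0.le)
  -- eventual integral bound
  have hevB : ∀ᶠ n in atTop, (∫⁻ y in Bn n, ENNReal.ofReal |v y - c| ^ q ∂μ)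
      ≤ 2 ^ q * (K * μ S + ENNReal.ofReal |cn n - c| ^ q * μ S) := by
    filter_upwards [hevA] with n hn
    calc (∫⁻ y in Bn n, ENNReal.ofReal |v y - c| ^ q ∂μ)
        ≤ ∫⁻ y in Bn n, 2 ^ q *
            (ENNReal.ofReal |v y - cn n| ^ q + ENNReal.ofReal |cn n - c| ^ q) ∂μ :=
          lintegral_mono fun y => hptwise n y
      _ = 2 ^ q * ((∫⁻ y in Bn n, ENNReal.ofReal |v y - cn n| ^ q ∂μ)
            + ENNReal.ofReal |cn n - c| ^ q * μ (Bn n)) := by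
          rw [lintegral_const_mul _ (f := fun y => ENNReal.ofReal |v y - cn n| ^ q + ENNReal.ofReal |cn n - c| ^ q) ((hFmeas (cn n)).add measurable_const),
            lintegral_add_right _ measurable_const, setLIntegral_const]
      _ ≤ 2 ^ q * (K * μ S + ENNReal.ofReal |cn n - c| ^ q * μ S) := by
          gcongr
          exact hBnS n
  -- Fatou along the exhaustion
  have hI_le : Iq ≤ liminf (fun n => ∫⁻ y in Bn n, ENNReal.ofReal |v y - c| ^ q ∂μ) atTop := by
    rw [hIq]
    exact lintegral_le_liminf_exhaust μ (hFmeas c) hSmeas hBmeas hexS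
  -- the bound sequence converges
  have herr_lim : Tendsto (fun n => ENNReal.ofReal |cn n - c| ^ q * μ S) atTop (𝓝 0) := by
    have h1 : Tendsto (fun n => |cn n - c| ^ q) atTop (𝓝 0) := by
      have h2 := ((Real.continuousAt_rpow_const 0 q (Or.inr hq0.le)).tendsto).comp hen_lim
      simpa [Real.zero_rpow hq0.ne', Function.comp_def] using h2
    have h3 : Tendsto (fun n => ENNReal.ofReal (|cn n - c| ^ q)) atTop (𝓝 0) := by
      simpa using ENNReal.tendsto_ofReal h1
    have h4 : (fun n => ENNReal.ofReal |cn n - c| ^ q)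
        = fun n => ENNReal.ofReal (|cn n - c| ^ q) := by
      funext n
      exact ENNReal.ofReal_rpow_of_nonneg (abs_nonneg _) hq0.le
    have h5 : Tendsto (fun n => ENNReal.ofReal |cn n - c| ^ q) atTop (𝓝 0) := by
      rw [h4]; exact h3
    simpa using ENNReal.Tendsto.mul_const h5 (Or.inr hmuS_fin.ne)
  have htlim : Tendsto (fun n => 2 ^ q * (K * μ S + ENNReal.ofReal |cn n - c| ^ q * μ S))
      atTop (𝓝 (2 ^ q * (K * μ S + 0))) := by
    refine ENNReal.Tendsto.const_mul (Tendsto.const_add _ herr_lim) ?_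
    exact Or.inr (ENNReal.rpow_ne_top_of_nonneg hq0.le (by norm_num))
  have hIq_le : Iq ≤ 2 ^ q * (K * μ S) := by
    refine hI_le.trans ?_
    have h1 := liminf_le_liminf hevB
    rw [htlim.liminf_eq, add_zero] at h1
    exact h1
  -- final computation
  have hmuS_ne : μ S ≠ 0 := hmuS_pos.ne'
  have hmuS_nt : μ S ≠ ∞ := hmuS_fin.ne
  calc (Iq / μ S) ^ (1 / q) ≤ ((2 ^ q * K * μ S) / μ S) ^ (1 / q) := by
        gcongr
        rw [mul_assoc]
        exact hIq_le
    _ = (2 ^ q * K) ^ (1 / q) := by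
        rw [mul_div_assoc, ENNReal.div_self hmuS_ne hmuS_nt, mul_one]
    _ = ENNReal.ofReal (4 * C * r) * (Il / μ Sl) ^ (1 / p) := by
        rw [hK]
        rw [show (2:ℝ≥0∞) ^ q * (ENNReal.ofReal (C * r) ^ q * (2 ^ q * (Il / μ Sl) ^ (q / p)))
            = (2 ^ q * 2 ^ q * ENNReal.ofReal (C * r) ^ q) * (Il / μ Sl) ^ (q / p) by ring]
        rw [ENNReal.mul_rpow_of_nonneg _ _ (by positivity : (0:ℝ) ≤ 1 / q)]
        rw [ENNReal.mul_rpow_of_nonneg _ _ (by positivity : (0:ℝ) ≤ 1 / q)]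
        rw [ENNReal.mul_rpow_of_nonneg _ _ (by positivity : (0:ℝ) ≤ 1 / q)]
        rw [← ENNReal.rpow_mul, ← ENNReal.rpow_mul, ← ENNReal.rpow_mul,
          mul_one_div_cancel hq0.ne', ENNReal.rpow_one, ENNReal.rpow_one]
        rw [show q / p * (1 / q) = 1 / p by
          rw [div_mul_div_comm, mul_one, mul_comm p q, ← div_div, div_self hq0.ne']]
        rw [show ENNReal.ofReal (4 * C * r) = 2 * 2 * ENNReal.ofReal (C * r) by
          rw [show (4:ℝ) * C * r = 4 * (C * r) by ring,
            ENNReal.ofReal_mul (by norm_num : (0:ℝ) ≤ 4), ENNReal.ofReal_ofNat]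
          norm_num]

end Paper
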